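/- Under the hypotheses of the weighted elliptic problem A*A u = g with ∫ u √ρ_∞ dx = 0 and ∫ g √ρ_∞ dx = 0, one has the second-order estimate ‖A² u‖_{L²} ≤ (1 + (C_P/√T₀)‖Φ‖_{W^{1,∞}}) ‖g‖_{L²}. -/
import Mathlib


open Real MeasureTheory intervalIntegral

/-- The operator `A u = √T₀ ∂_x u − (E/(2√T₀)) u` with `E = −∂_x Φ`. -/
noncomputable def opA (T₀ : ℝ) (Φ : ℝ → ℝ) (u : ℝ → ℝ) : ℝ → ℝ :=
  fun x => Real.sqrt T₀ * deriv u x - (-(deriv Φ x)) / (2 * Real.sqrt T₀) * u x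

/-- The formal adjoint `A* u = −√T₀ ∂_x u − (E/(2√T₀)) u` with `E = −∂_x Φ`. -/
noncomputable def opAstar (T₀ : ℝ) (Φ : ℝ → ℝ) (u : ℝ → ℝ) : ℝ → ℝ :=
  fun x => -(Real.sqrt T₀ * deriv u x) - (-(deriv Φ x)) / (2 * Real.sqrt T₀) * u x

/-- Cauchy–Schwarz for interval integrals of continuous functions. -/
lemma cs_interval (a b : ℝ → ℝ) (ha : Continuous a) (hb : Continuous b) :
    (∫ x in (0:ℝ)..1, a x * b x)
      ≤ Real.sqrt (∫ x in (0:ℝ)..1, a x ^ 2) * Real.sqrt (∫ x in (0:ℝ)..1, b x ^ 2) := by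
  set A := ∫ x in (0:ℝ)..1, a x ^ 2 with hA
  set B := ∫ x in (0:ℝ)..1, b x ^ 2 with hB
  set P := ∫ x in (0:ℝ)..1, a x * b x with hP
  have hAnn : 0 ≤ A := intervalIntegral.integral_nonneg (by norm_num) (fun x _ => sq_nonneg _)
  have hBnn : 0 ≤ B := intervalIntegral.integral_nonneg (by norm_num) (fun x _ => sq_nonneg _)
  have hia : IntervalIntegrable (fun x => a x ^ 2) volume 0 1 := (ha.pow 2).intervalIntegrable _ _
  have hib : IntervalIntegrable (fun x => b x ^ 2) volume 0 1 := (hb.pow 2).intervalIntegrable _ _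
  have hiab : IntervalIntegrable (fun x => a x * b x) volume 0 1 :=
    (ha.mul hb).intervalIntegrable _ _
  have key : ∀ t : ℝ, 0 ≤ B * (t * t) + (-2 * P) * t + A := by
    intro t
    have h0 : 0 ≤ ∫ x in (0:ℝ)..1, (a x - t * b x) ^ 2 :=
      intervalIntegral.integral_nonneg (by norm_num) (fun x _ => sq_nonneg _)
    have hexp : (∫ x in (0:ℝ)..1, (a x - t * b x) ^ 2)
        = B * (t * t) + (-2 * P) * t + A := by
      have : ∀ x : ℝ, (a x - t * b x) ^ 2
          = (t * t) * b x ^ 2 + (-2 * t) * (a x * b x) + a x ^ 2 := by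
        intro x; ring
      rw [intervalIntegral.integral_congr (fun x _ => this x)]
      rw [intervalIntegral.integral_add ((hib.const_mul _).add (hiab.const_mul _)) hia,
        intervalIntegral.integral_add (hib.const_mul _) (hiab.const_mul _),
        intervalIntegral.integral_const_mul, intervalIntegral.integral_const_mul]
      ring
    linarith [hexp ▸ h0]
  have hd : discrim B (-2 * P) A ≤ 0 := discrim_le_zero key
  have hP2 : P ^ 2 ≤ A * B := by
    rw [discrim] at hd; nlinarith
  calc P ≤ |P| := le_abs_self P
    _ = Real.sqrt (P ^ 2) := (Real.sqrt_sq_eq_abs P).symm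
    _ ≤ Real.sqrt (A * B) := Real.sqrt_le_sqrt hP2
    _ = Real.sqrt A * Real.sqrt B := Real.sqrt_mul hAnn _

/-- Minkowski for interval integrals of continuous functions. -/
lemma minkowski_interval (a b : ℝ → ℝ) (ha : Continuous a) (hb : Continuous b) :
    Real.sqrt (∫ x in (0:ℝ)..1, (a x + b x) ^ 2)
      ≤ Real.sqrt (∫ x in (0:ℝ)..1, a x ^ 2) + Real.sqrt (∫ x in (0:ℝ)..1, b x ^ 2) := by
  have hia : IntervalIntegrable (fun x => a x ^ 2) volume 0 1 := (ha.pow 2).intervalIntegrable _ _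
  have hib : IntervalIntegrable (fun x => b x ^ 2) volume 0 1 := (hb.pow 2).intervalIntegrable _ _
  have hiab : IntervalIntegrable (fun x => a x * b x) volume 0 1 :=
    (ha.mul hb).intervalIntegrable _ _
  set A := ∫ x in (0:ℝ)..1, a x ^ 2
  set B := ∫ x in (0:ℝ)..1, b x ^ 2
  have hAnn : 0 ≤ A := intervalIntegral.integral_nonneg (by norm_num) (fun x _ => sq_nonneg _)
  have hBnn : 0 ≤ B := intervalIntegral.integral_nonneg (by norm_num) (fun x _ => sq_nonneg _)
  have hcs := cs_interval a b ha hb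
  have hexp : (∫ x in (0:ℝ)..1, (a x + b x) ^ 2)
      = A + 2 * (∫ x in (0:ℝ)..1, a x * b x) + B := by
    have : ∀ x : ℝ, (a x + b x) ^ 2 = a x ^ 2 + 2 * (a x * b x) + b x ^ 2 := by
      intro x; ring
    rw [intervalIntegral.integral_congr (fun x _ => this x)]
    rw [intervalIntegral.integral_add (hia.add (hiab.const_mul 2)) hib,
      intervalIntegral.integral_add hia (hiab.const_mul 2),
      intervalIntegral.integral_const_mul]
  have hbound : (∫ x in (0:ℝ)..1, (a x + b x) ^ 2)
      ≤ (Real.sqrt A + Real.sqrt B) ^ 2 := by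
    have hA := Real.sq_sqrt hAnn
    have hB := Real.sq_sqrt hBnn
    rw [hexp]; nlinarith
  calc Real.sqrt (∫ x in (0:ℝ)..1, (a x + b x) ^ 2)
      ≤ Real.sqrt ((Real.sqrt A + Real.sqrt B) ^ 2) := Real.sqrt_le_sqrt hbound
    _ = Real.sqrt A + Real.sqrt B := by
        rw [Real.sqrt_sq (by positivity)]

/-- Under the hypotheses of the weighted elliptic problem `A*A u = g`
with `∫ u √ρ_∞ = 0` and `∫ g √ρ_∞ = 0`, and given the first-order estimate
`‖A u‖_{L²} ≤ C_P ‖g‖_{L²}`, one has the second-order estimate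
`‖A² u‖_{L²} ≤ (1 + (C_P/√T₀)‖Φ‖_{W^{1,∞}}) ‖g‖_{L²}`, where `CΦ` is a
`W^{1,∞}`-bound for `Φ` and `L²` quantities are over one period. -/
theorem elliptic_second_order_estimate
    (T₀ : ℝ) (hT₀ : 0 < T₀)
    (Φ : ℝ → ℝ) (hΦ : ContDiff ℝ 2 Φ) (hΦper : Function.Periodic Φ 1)
    (c₀ : ℝ) (hc₀ : 0 < c₀)
    (ρinf : ℝ → ℝ) (hρ : ∀ x : ℝ, ρinf x = c₀ * Real.exp (-(Φ x) / T₀))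
    (CP : ℝ) (hCP : 0 < CP)
    (CΦ : ℝ) (hCΦ : ∀ x : ℝ, |deriv Φ x| ≤ CΦ)
    (g u : ℝ → ℝ)
    (hg : Continuous g) (hgper : Function.Periodic g 1)
    (hg0 : (∫ x in (0:ℝ)..1, g x * Real.sqrt (ρinf x)) = 0)
    (hu : ContDiff ℝ 2 u) (huper : Function.Periodic u 1)
    (hu0 : (∫ x in (0:ℝ)..1, u x * Real.sqrt (ρinf x)) = 0)
    (heq : ∀ x : ℝ, opAstar T₀ Φ (opA T₀ Φ u) x = g x)
    (hfirst : Real.sqrt (∫ x in (0:ℝ)..1, opA T₀ Φ u x ^ 2)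
      ≤ CP * Real.sqrt (∫ x in (0:ℝ)..1, g x ^ 2)) :
    Real.sqrt (∫ x in (0:ℝ)..1, opA T₀ Φ (opA T₀ Φ u) x ^ 2)
      ≤ (1 + CP / Real.sqrt T₀ * CΦ) * Real.sqrt (∫ x in (0:ℝ)..1, g x ^ 2) := by
  have hsT : 0 < Real.sqrt T₀ := Real.sqrt_pos.mpr hT₀
  set v := opA T₀ Φ u with hv
  -- continuity facts
  have hΦ' : Continuous (deriv Φ) := (hΦ.iterate_deriv' 1 1).continuous
  have hu' : Continuous (deriv u) := (hu.iterate_deriv' 1 1).continuous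
  have huc : Continuous u := hu.continuous
  have hvc : Continuous v := by
    unfold v; unfold opA
    fun_prop
  -- pointwise identity : A v = (Φ'/√T₀) v − g
  have hpt : ∀ x : ℝ, opA T₀ Φ v x = deriv Φ x / Real.sqrt T₀ * v x + (-(g x)) := by
    intro x
    have h := heq x
    have hsum : opA T₀ Φ v x + opAstar T₀ Φ v x = deriv Φ x / Real.sqrt T₀ * v x := by
      unfold opA opAstar
      field_simp
      ring
    linarith
  -- functions for Minkowski
  set a : ℝ → ℝ := fun x => deriv Φ x / Real.sqrt T₀ * v x with ha
  have hac : Continuous a := by unfold a; fun_prop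
  have hcongr : (∫ x in (0:ℝ)..1, opA T₀ Φ v x ^ 2)
      = ∫ x in (0:ℝ)..1, (a x + (-(g x))) ^ 2 :=
    intervalIntegral.integral_congr (fun x _ => by rw [hpt x])
  have hmink := minkowski_interval a (fun x => -(g x)) hac hg.neg
  have hgneg : (∫ x in (0:ℝ)..1, (-(g x)) ^ 2) = ∫ x in (0:ℝ)..1, g x ^ 2 := by
    simp
  -- bound on the a-term
  have hCΦ0 : 0 ≤ CΦ := le_trans (abs_nonneg _) (hCΦ 0)
  have hamono : (∫ x in (0:ℝ)..1, a x ^ 2)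
      ≤ ∫ x in (0:ℝ)..1, (CΦ / Real.sqrt T₀) ^ 2 * v x ^ 2 := by
    apply intervalIntegral.integral_mono_on (by norm_num)
      ((hac.pow 2).intervalIntegrable _ _)
      ((continuous_const.mul (hvc.pow 2)).intervalIntegrable _ _)
    intro x _
    unfold a
    have h1 : |deriv Φ x / Real.sqrt T₀| ≤ CΦ / Real.sqrt T₀ := by
      rw [abs_div, abs_of_pos hsT]
      gcongr
      exact hCΦ x
    calc (deriv Φ x / Real.sqrt T₀ * v x) ^ 2
        = (deriv Φ x / Real.sqrt T₀) ^ 2 * v x ^ 2 := by ring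
      _ ≤ (CΦ / Real.sqrt T₀) ^ 2 * v x ^ 2 := by
          apply mul_le_mul_of_nonneg_right _ (sq_nonneg _)
          rw [← sq_abs (deriv Φ x / Real.sqrt T₀)]
          exact pow_le_pow_left₀ (abs_nonneg _) h1 2
  have haint : Real.sqrt (∫ x in (0:ℝ)..1, a x ^ 2)
      ≤ CΦ / Real.sqrt T₀ * Real.sqrt (∫ x in (0:ℝ)..1, v x ^ 2) := by
    have h2 : (∫ x in (0:ℝ)..1, (CΦ / Real.sqrt T₀) ^ 2 * v x ^ 2)
        = (CΦ / Real.sqrt T₀) ^ 2 * ∫ x in (0:ℝ)..1, v x ^ 2 :=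
      intervalIntegral.integral_const_mul _ _
    calc Real.sqrt (∫ x in (0:ℝ)..1, a x ^ 2)
        ≤ Real.sqrt ((CΦ / Real.sqrt T₀) ^ 2 * ∫ x in (0:ℝ)..1, v x ^ 2) := by
          exact Real.sqrt_le_sqrt (h2 ▸ hamono)
      _ = CΦ / Real.sqrt T₀ * Real.sqrt (∫ x in (0:ℝ)..1, v x ^ 2) := by
          rw [Real.sqrt_mul (sq_nonneg _), Real.sqrt_sq (by positivity)]
  have hvfirst : Real.sqrt (∫ x in (0:ℝ)..1, v x ^ 2)
      ≤ CP * Real.sqrt (∫ x in (0:ℝ)..1, g x ^ 2) := hfirst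
  have hG0 : 0 ≤ Real.sqrt (∫ x in (0:ℝ)..1, g x ^ 2) := Real.sqrt_nonneg _
  calc Real.sqrt (∫ x in (0:ℝ)..1, opA T₀ Φ v x ^ 2)
      = Real.sqrt (∫ x in (0:ℝ)..1, (a x + (-(g x))) ^ 2) := by rw [hcongr]
    _ ≤ Real.sqrt (∫ x in (0:ℝ)..1, a x ^ 2)
        + Real.sqrt (∫ x in (0:ℝ)..1, (-(g x)) ^ 2) := hmink
    _ = Real.sqrt (∫ x in (0:ℝ)..1, a x ^ 2)
        + Real.sqrt (∫ x in (0:ℝ)..1, g x ^ 2) := by rw [hgneg]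
    _ ≤ CΦ / Real.sqrt T₀ * (CP * Real.sqrt (∫ x in (0:ℝ)..1, g x ^ 2))
        + Real.sqrt (∫ x in (0:ℝ)..1, g x ^ 2) := by
        have := haint.trans (mul_le_mul_of_nonneg_left hvfirst (by positivity))
        linarith
    _ = (1 + CP / Real.sqrt T₀ * CΦ) * Real.sqrt (∫ x in (0:ℝ)..1, g x ^ 2) := by
        ring
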